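/- Let U, Û ∈ O_{p,r} and let U_⊥ ∈ O_{p,p−r} be an orthogonal complement of U. Then there exists an orthogonal matrix R ∈ O_r such that ‖ÛᵀU − R‖ ≤ ‖U_⊥ᵀÛ‖², where ‖·‖ is the spectral (operator) norm. -/

import Mathlib

open Matrix

/-- Spectral (operator) norm of a real matrix. -/
noncomputable def spec {m n : ℕ} (A : Matrix (Fin m) (Fin n) ℝ) : ℝ :=
  sSup {c : ℝ | ∃ v : Fin n → ℝ, (∑ j, v j ^ 2) ≤ 1 ∧
    c = Real.sqrt (∑ i, (A.mulVec v i) ^ 2)}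

lemma spec_bddAbove {m n : ℕ} (A : Matrix (Fin m) (Fin n) ℝ) :
    BddAbove {c : ℝ | ∃ v : Fin n → ℝ, (∑ j, v j ^ 2) ≤ 1 ∧
      c = Real.sqrt (∑ i, (A.mulVec v i) ^ 2)} := by
  refine ⟨Real.sqrt (∑ i, ∑ j, A i j ^ 2), ?_⟩
  rintro c ⟨v, hv, rfl⟩
  apply Real.sqrt_le_sqrt
  have : ∀ i, (A.mulVec v i) ^ 2 ≤ (∑ j, A i j ^ 2) * (∑ j, v j ^ 2) := by
    intro i
    simpa [Matrix.mulVec, dotProduct] using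
      Finset.sum_mul_sq_le_sq_mul_sq Finset.univ (fun j => A i j) v
  calc (∑ i, (A.mulVec v i) ^ 2) ≤ ∑ i, (∑ j, A i j ^ 2) * (∑ j, v j ^ 2) :=
        Finset.sum_le_sum fun i _ => this i
    _ ≤ ∑ i, (∑ j, A i j ^ 2) * 1 := by
        refine Finset.sum_le_sum fun i _ => ?_
        exact mul_le_mul_of_nonneg_left hv (Finset.sum_nonneg fun j _ => sq_nonneg _)
    _ = ∑ i, ∑ j, A i j ^ 2 := by simp

lemma le_spec {m n : ℕ} (A : Matrix (Fin m) (Fin n) ℝ) (v : Fin n → ℝ)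
    (hv : (∑ j, v j ^ 2) ≤ 1) : Real.sqrt (∑ i, (A.mulVec v i) ^ 2) ≤ spec A :=
  le_csSup (spec_bddAbove A) ⟨v, hv, rfl⟩

lemma spec_nonneg {m n : ℕ} (A : Matrix (Fin m) (Fin n) ℝ) : 0 ≤ spec A := by
  have := le_spec A 0 (by simp)
  exact le_trans (Real.sqrt_nonneg _) this

lemma spec_le {m n : ℕ} (A : Matrix (Fin m) (Fin n) ℝ) (c : ℝ) (hc : 0 ≤ c)
    (h : ∀ v : Fin n → ℝ, (∑ j, v j ^ 2) ≤ 1 → (∑ i, (A.mulVec v i) ^ 2) ≤ c ^ 2) :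
    spec A ≤ c := by
  apply Real.sSup_le _ hc
  rintro x ⟨v, hv, rfl⟩
  calc Real.sqrt (∑ i, (A.mulVec v i) ^ 2) ≤ Real.sqrt (c ^ 2) :=
        Real.sqrt_le_sqrt (h v hv)
    _ = c := Real.sqrt_sq hc

lemma spec_mulVec {m n : ℕ} (A : Matrix (Fin m) (Fin n) ℝ) (v : Fin n → ℝ) :
    (∑ i, (A.mulVec v i) ^ 2) ≤ (spec A) ^ 2 * ∑ j, v j ^ 2 := by
  set t := ∑ j, v j ^ 2 with ht
  have ht0 : 0 ≤ t := Finset.sum_nonneg fun j _ => sq_nonneg _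
  rcases eq_or_lt_of_le ht0 with h0 | hpos
  · have hv : v = 0 := by
      funext j
      have := (Finset.sum_eq_zero_iff_of_nonneg (fun j _ => sq_nonneg (v j))).mp h0.symm
      exact pow_eq_zero_iff (n := 2) (by norm_num) |>.mp (this j (Finset.mem_univ j))
    simp [hv]
    positivity
  · set w : Fin n → ℝ := fun j => (Real.sqrt t)⁻¹ * v j with hw
    have hst : Real.sqrt t > 0 := Real.sqrt_pos.mpr hpos
    have hw2 : (∑ j, w j ^ 2) = 1 := by
      simp only [hw, mul_pow, ← Finset.mul_sum]
      rw [inv_pow, Real.sq_sqrt (le_of_lt hpos), ← ht]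
      field_simp
    have hle := le_spec A w (le_of_eq hw2)
    have hAw : ∀ i, A.mulVec w i = (Real.sqrt t)⁻¹ * A.mulVec v i := by
      intro i
      have : w = (Real.sqrt t)⁻¹ • v := by funext j; simp [hw]
      rw [this, Matrix.mulVec_smul]; simp
    have hsum : (∑ i, (A.mulVec w i) ^ 2) = t⁻¹ * ∑ i, (A.mulVec v i) ^ 2 := by
      simp only [hAw, mul_pow, ← Finset.mul_sum, inv_pow, Real.sq_sqrt (le_of_lt hpos)]
    have hsq : (∑ i, (A.mulVec w i) ^ 2) ≤ (spec A) ^ 2 := by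
      have h1 : Real.sqrt (∑ i, (A.mulVec w i) ^ 2) ^ 2 ≤ (spec A) ^ 2 := by
        apply pow_le_pow_left₀ (Real.sqrt_nonneg _) hle
      rwa [Real.sq_sqrt (Finset.sum_nonneg fun i _ => sq_nonneg _)] at h1
    rw [hsum] at hsq
    calc (∑ i, (A.mulVec v i) ^ 2) = t * (t⁻¹ * ∑ i, (A.mulVec v i) ^ 2) := by
          field_simp
      _ ≤ t * (spec A) ^ 2 := mul_le_mul_of_nonneg_left hsq ht0
      _ = (spec A) ^ 2 * t := mul_comm _ _


lemma dot_aux {m n : ℕ} (A : Matrix (Fin m) (Fin n) ℝ) (x y : Fin n → ℝ) :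
    (A.mulVec x) ⬝ᵥ (A.mulVec y) = x ⬝ᵥ ((Aᵀ * A).mulVec y) := by
  rw [← Matrix.mulVec_mulVec, Matrix.dotProduct_mulVec x, Matrix.vecMul_transpose]

lemma sum_sq_eq_dot {n : ℕ} (v : Fin n → ℝ) : (∑ j, v j ^ 2) = v ⬝ᵥ v := by
  simp [dotProduct, sq]

lemma inner_eq_dot {r : ℕ} (x y : EuclideanSpace ℝ (Fin r)) :
    (inner ℝ x y : ℝ) = (fun i => x i) ⬝ᵥ (fun i => y i) := by
  simp [PiLp.inner_apply, dotProduct, RCLike.inner_apply, mul_comm]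

lemma polar_aux {r : ℕ} (M : Matrix (Fin r) (Fin r) ℝ) (s : ℝ) (hs0 : 0 ≤ s) (hs1 : s ≤ 1)
    (h1 : ∀ v : Fin r → ℝ, (1 - s) * (∑ j, v j ^ 2) ≤ ∑ i, (M.mulVec v i) ^ 2)
    (h2 : ∀ v : Fin r → ℝ, (∑ i, (M.mulVec v i) ^ 2) ≤ ∑ j, v j ^ 2) :
    ∃ R₀ : Matrix (Fin r) (Fin r) ℝ, R₀ᵀ * R₀ = 1 ∧ R₀ * R₀ᵀ = 1 ∧
      ∀ v : Fin r → ℝ, (∑ i, ((M - R₀).mulVec v i) ^ 2) ≤ s ^ 2 * ∑ j, v j ^ 2 := by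
  have hG : (Mᵀ * M).IsHermitian := by
    have := Matrix.isHermitian_conjTranspose_mul_self M
    rwa [Matrix.conjTranspose_eq_transpose_of_trivial] at this
  set b0 := hG.eigenvectorBasis with hb0
  set lam := hG.eigenvalues with hlam
  -- the image vectors
  set f : Fin r → (Fin r → ℝ) := fun i => M.mulVec (fun j => b0 i j) with hf
  have hb0dot : ∀ i j : Fin r, (fun k => b0 i k) ⬝ᵥ (fun k => b0 j k)
      = if i = j then (1:ℝ) else 0 := by
    intro i j
    rw [← inner_eq_dot]
    exact orthonormal_iff_ite.mp b0.orthonormal i j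
  have hfdot : ∀ i j : Fin r, f i ⬝ᵥ f j = if i = j then lam j else 0 := by
    intro i j
    rw [hf, dot_aux]
    have : (Mᵀ * M).mulVec (fun k => b0 j k) = lam j • (fun k => b0 j k) := by
      simpa using hG.mulVec_eigenvectorBasis j
    rw [this, dotProduct_smul, hb0dot]
    by_cases h : i = j <;> simp [h, smul_eq_mul]
  -- eigenvalue bounds
  have hb0norm : ∀ i : Fin r, (∑ k, (b0 i k) ^ 2) = 1 := by
    intro i
    rw [sum_sq_eq_dot]
    simpa using hb0dot i i
  have hlam_eq : ∀ i, lam i = ∑ k, (f i k) ^ 2 := by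
    intro i
    rw [sum_sq_eq_dot]
    simpa using (hfdot i i).symm
  have hlam_nonneg : ∀ i, 0 ≤ lam i := fun i =>
    (hlam_eq i) ▸ Finset.sum_nonneg fun k _ => sq_nonneg _
  have hlam_le : ∀ i, lam i ≤ 1 := by
    intro i
    rw [hlam_eq i]
    have := h2 (fun j => b0 i j)
    rwa [hb0norm i] at this
  have hlam_ge : ∀ i, 1 - s ≤ lam i := by
    intro i
    rw [hlam_eq i]
    have := h1 (fun j => b0 i j)
    rwa [hb0norm i, mul_one] at this
  set σ : Fin r → ℝ := fun i => Real.sqrt (lam i) with hσ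
  have hσ_nonneg : ∀ i, 0 ≤ σ i := fun i => Real.sqrt_nonneg _
  have hσ_le : ∀ i, σ i ≤ 1 := by
    intro i
    rw [hσ]
    simpa using Real.sqrt_le_sqrt (hlam_le i)
  have hσ_ge : ∀ i, 1 - s ≤ σ i := by
    intro i
    have h1s : (0:ℝ) ≤ 1 - s := by linarith
    have : (1 - s) ^ 2 ≤ lam i := by
      calc (1 - s) ^ 2 ≤ (1 - s) * 1 := by nlinarith
        _ = 1 - s := mul_one _
        _ ≤ lam i := hlam_ge i
    calc 1 - s = Real.sqrt ((1-s)^2) := (Real.sqrt_sq h1s).symm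
      _ ≤ σ i := Real.sqrt_le_sqrt this
  have hσ_sq : ∀ i, (σ i - 1) ^ 2 ≤ s ^ 2 := by
    intro i
    apply sq_le_sq'
    · linarith [hσ_ge i]
    · linarith [hσ_le i, hs0]
  -- orthonormal family on support
  set S : Set (Fin r) := {i | lam i ≠ 0} with hS
  set vfun : Fin r → EuclideanSpace ℝ (Fin r) :=
    fun i => (σ i)⁻¹ • ((WithLp.equiv 2 (Fin r → ℝ)).symm (f i)) with hvfun
  have hvfun_app : ∀ i k, vfun i k = (σ i)⁻¹ * f i k := by
    intro i k
    simp [hvfun]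
  have hσ_pos : ∀ i ∈ S, 0 < σ i := by
    intro i hi
    exact Real.sqrt_pos.mpr (lt_of_le_of_ne (hlam_nonneg i) (Ne.symm hi))
  have horthS : Orthonormal ℝ (S.restrict vfun) := by
    rw [orthonormal_iff_ite]
    rintro ⟨i, hi⟩ ⟨j, hj⟩
    have : (inner ℝ (vfun i) (vfun j) : ℝ) = (σ i)⁻¹ * (σ j)⁻¹ * (f i ⬝ᵥ f j) := by
      rw [inner_eq_dot]
      simp only [hvfun_app]
      simp [dotProduct, Finset.mul_sum]
      apply Finset.sum_congr rfl
      intro k _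
      ring
    rw [show S.restrict vfun ⟨i, hi⟩ = vfun i from rfl,
      show S.restrict vfun ⟨j, hj⟩ = vfun j from rfl, this, hfdot]
    by_cases h : i = j
    · subst h
      simp only [if_pos rfl, Subtype.mk_eq_mk, if_pos rfl]
      have hσi := hσ_pos i hi
      have : σ i * σ i = lam i := Real.mul_self_sqrt (hlam_nonneg i)
      field_simp
      simp only [Subtype.mk_eq_mk, if_true] at *
      nlinarith
    · have : (⟨i, hi⟩ : S) ≠ ⟨j, hj⟩ := by simpa using h
      rw [if_neg h, if_neg this]
      ring
  obtain ⟨b, hb⟩ := horthS.exists_orthonormalBasis_extension_of_card_eq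
    (by simp [finrank_euclideanSpace])
  -- key singular-vector relation
  have hkey : ∀ i k, f i k = σ i * b i k := by
    intro i k
    by_cases hi : i ∈ S
    · rw [hb i hi, hvfun_app]
      have := (hσ_pos i hi).ne'
      field_simp
    · have hlam0 : lam i = 0 := by simpa [hS] using hi
      have hf0 : ∑ k, (f i k) ^ 2 = 0 := by rw [← hlam_eq i, hlam0]
      have : f i k = 0 := by
        have := (Finset.sum_eq_zero_iff_of_nonneg
          (fun k _ => sq_nonneg (f i k))).mp hf0 k (Finset.mem_univ k)
        exact pow_eq_zero_iff (n := 2) (by norm_num) |>.mp this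
      rw [this]
      simp [hσ, hlam0]
  -- matrices of the two bases
  set Vm : Matrix (Fin r) (Fin r) ℝ := Matrix.of fun j i => b0 i j with hVm
  set W : Matrix (Fin r) (Fin r) ℝ := Matrix.of fun j i => b i j with hW
  have hbdot : ∀ i j : Fin r, (fun k => b i k) ⬝ᵥ (fun k => b j k)
      = if i = j then (1:ℝ) else 0 := by
    intro i j
    rw [← inner_eq_dot]
    exact orthonormal_iff_ite.mp b.orthonormal i j
  have hVmO : Vmᵀ * Vm = 1 := by
    ext i j
    simp only [Matrix.mul_apply, Matrix.transpose_apply, hVm, Matrix.of_apply,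
      Matrix.one_apply]
    simpa [dotProduct] using hb0dot i j
  have hWO : Wᵀ * W = 1 := by
    ext i j
    simp only [Matrix.mul_apply, Matrix.transpose_apply, hW, Matrix.of_apply,
      Matrix.one_apply]
    simpa [dotProduct] using hbdot i j
  have hVm2 : Vm * Vmᵀ = 1 := mul_eq_one_comm.mp hVmO
  have hW2 : W * Wᵀ = 1 := mul_eq_one_comm.mp hWO
  have hMV : M * Vm = W * Matrix.diagonal σ := by
    ext j i
    rw [Matrix.mul_diagonal]
    have : (M * Vm) j i = f i j := by
      simp [Matrix.mul_apply, hVm, hf, Matrix.mulVec, dotProduct]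
    rw [this, hkey i j]
    simp [hW, mul_comm]
  have hM : M = W * Matrix.diagonal σ * Vmᵀ := by
    calc M = M * (Vm * Vmᵀ) := by rw [hVm2, mul_one]
      _ = (M * Vm) * Vmᵀ := by rw [mul_assoc]
      _ = W * Matrix.diagonal σ * Vmᵀ := by rw [hMV]
  refine ⟨W * Vmᵀ, ?_, ?_, ?_⟩
  · rw [Matrix.transpose_mul, Matrix.transpose_transpose, mul_assoc,
      ← mul_assoc Wᵀ, hWO, one_mul, hVm2]
  · rw [Matrix.transpose_mul, Matrix.transpose_transpose, mul_assoc,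
      ← mul_assoc Vmᵀ, hVmO, one_mul, hW2]
  · intro v
    have hdiff : M - W * Vmᵀ = W * Matrix.diagonal (fun i => σ i - 1) * Vmᵀ := by
      rw [hM]
      have : Matrix.diagonal (fun i => σ i - 1)
          = Matrix.diagonal σ - 1 := by
        rw [← Matrix.diagonal_one, Matrix.diagonal_sub]
      rw [this, Matrix.mul_sub, Matrix.sub_mul, Matrix.mul_one]
    rw [hdiff]
    set u : Fin r → ℝ := Vmᵀ.mulVec v with hu
    set z : Fin r → ℝ := (Matrix.diagonal (fun i => σ i - 1)).mulVec u with hz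
    have hWz : (W * Matrix.diagonal (fun i => σ i - 1) * Vmᵀ).mulVec v = W.mulVec z := by
      rw [← Matrix.mulVec_mulVec, ← Matrix.mulVec_mulVec, ← hu, ← hz]
    rw [hWz]
    have hsum1 : (∑ i, (W.mulVec z i) ^ 2) = ∑ i, z i ^ 2 := by
      rw [sum_sq_eq_dot, sum_sq_eq_dot, dot_aux, hWO, Matrix.one_mulVec]
    have hsum2 : (∑ i, u i ^ 2) = ∑ j, v j ^ 2 := by
      rw [sum_sq_eq_dot, sum_sq_eq_dot (v := v), hu, dot_aux,
        Matrix.transpose_transpose, hVm2, Matrix.one_mulVec]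
    have hzi : ∀ i, z i = (σ i - 1) * u i := by
      intro i
      rw [hz, Matrix.mulVec_diagonal]
    rw [hsum1]
    calc (∑ i, z i ^ 2) = ∑ i, (σ i - 1) ^ 2 * u i ^ 2 := by
          apply Finset.sum_congr rfl
          intro i _
          rw [hzi i]; ring
      _ ≤ ∑ i, s ^ 2 * u i ^ 2 := by
          apply Finset.sum_le_sum
          intro i _
          exact mul_le_mul_of_nonneg_right (hσ_sq i) (sq_nonneg _)
      _ = s ^ 2 * ∑ i, u i ^ 2 := by rw [← Finset.mul_sum]
      _ = s ^ 2 * ∑ j, v j ^ 2 := by rw [hsum2]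

example : True := trivial

lemma transpose_transfer {r : ℕ} (X : Matrix (Fin r) (Fin r) ℝ) (c : ℝ)
    (h : ∀ v : Fin r → ℝ, (∑ i, (X.mulVec v i) ^ 2) ≤ c ^ 2 * ∑ j, v j ^ 2) :
    ∀ v : Fin r → ℝ, (∑ i, (Xᵀ.mulVec v i) ^ 2) ≤ c ^ 2 * ∑ j, v j ^ 2 := by
  intro v
  set w : Fin r → ℝ := Xᵀ.mulVec v with hw
  set t : ℝ := ∑ i, w i ^ 2 with ht
  have ht0 : 0 ≤ t := Finset.sum_nonneg fun i _ => sq_nonneg _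
  have hveq : t = v ⬝ᵥ (X.mulVec w) := by
    rw [ht, sum_sq_eq_dot, hw]
    rw [Matrix.mulVec_transpose, Matrix.dotProduct_mulVec v]
  have hCS : t ^ 2 ≤ (∑ j, v j ^ 2) * ∑ i, (X.mulVec w i) ^ 2 := by
    rw [hveq]
    exact Finset.sum_mul_sq_le_sq_mul_sq Finset.univ v (X.mulVec w)
  have hXw : (∑ i, (X.mulVec w i) ^ 2) ≤ c ^ 2 * t := h w
  rcases eq_or_lt_of_le ht0 with h0 | hpos
  · rw [← h0]
    positivity
  · have h2 : t ^ 2 ≤ (∑ j, v j ^ 2) * (c ^ 2 * t) := by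
      calc t ^ 2 ≤ (∑ j, v j ^ 2) * ∑ i, (X.mulVec w i) ^ 2 := hCS
        _ ≤ (∑ j, v j ^ 2) * (c ^ 2 * t) := by
            apply mul_le_mul_of_nonneg_left hXw
            exact Finset.sum_nonneg fun j _ => sq_nonneg _
    nlinarith [hpos]


/-- For `U, Û ∈ O_{p,r}` and `U_⊥` an orthogonal complement of `U`, there is an
orthogonal `R ∈ O_r` with `‖ÛᵀU − R‖ ≤ ‖U_⊥ᵀÛ‖²`. -/
theorem stmt2 (p r : ℕ) (U Uhat : Matrix (Fin p) (Fin r) ℝ)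
    (Uperp : Matrix (Fin p) (Fin (p - r)) ℝ)
    (hU : Uᵀ * U = 1) (hUhat : Uhatᵀ * Uhat = 1)
    (hUperp : Uperpᵀ * Uperp = 1) (horth : Uᵀ * Uperp = 0)
    (hcomplete : U * Uᵀ + Uperp * Uperpᵀ = 1) :
    ∃ R : Matrix (Fin r) (Fin r) ℝ, Rᵀ * R = 1 ∧ R * Rᵀ = 1 ∧
      spec (Uhatᵀ * U - R) ≤ spec (Uperpᵀ * Uhat) ^ 2 := by
  set A : Matrix (Fin r) (Fin r) ℝ := Uhatᵀ * U with hA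
  set B : Matrix (Fin (p - r)) (Fin r) ℝ := Uperpᵀ * Uhat with hB
  have key : Bᵀ * B + A * Aᵀ = 1 := by
    have h1 : Bᵀ * B + A * Aᵀ = Uhatᵀ * ((U * Uᵀ + Uperp * Uperpᵀ) * Uhat) := by
      rw [hA, hB, Matrix.transpose_mul, Matrix.transpose_transpose,
        Matrix.transpose_mul, Matrix.transpose_transpose]
      simp only [Matrix.add_mul, Matrix.mul_add, Matrix.mul_assoc]
      exact add_comm _ _
    rw [h1, hcomplete, Matrix.one_mul, hUhat]
  have point : ∀ w : Fin r → ℝ,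
      (∑ i, (B.mulVec w i) ^ 2) + (∑ i, (Aᵀ.mulVec w i) ^ 2) = ∑ j, w j ^ 2 := by
    intro w
    rw [sum_sq_eq_dot (B.mulVec w), sum_sq_eq_dot (Aᵀ.mulVec w), sum_sq_eq_dot w,
      dot_aux, dot_aux, Matrix.transpose_transpose]
    rw [← dotProduct_add]
    rw [← Matrix.add_mulVec, key, Matrix.one_mulVec]
  have hs0 : 0 ≤ spec B := spec_nonneg B
  have hBle : spec B ≤ 1 := by
    apply spec_le B 1 zero_le_one
    intro v hv
    have hp := point v
    have h0 : 0 ≤ ∑ i, (Aᵀ.mulVec v i) ^ 2 := Finset.sum_nonneg fun i _ => sq_nonneg _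
    calc (∑ i, (B.mulVec v i) ^ 2) ≤ ∑ j, v j ^ 2 := by linarith
      _ ≤ 1 := hv
      _ = 1 ^ 2 := by norm_num
  obtain ⟨R₀, hR1, hR2, hRb⟩ := polar_aux Aᵀ (spec B ^ 2) (sq_nonneg _)
    (by nlinarith)
    (by
      intro v
      have hp := point v
      have hBv := spec_mulVec B v
      linarith)
    (by
      intro v
      have hp := point v
      have h0 : 0 ≤ ∑ i, (B.mulVec v i) ^ 2 := Finset.sum_nonneg fun i _ => sq_nonneg _
      linarith)
  refine ⟨R₀ᵀ, ?_, ?_, ?_⟩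
  · rw [Matrix.transpose_transpose]; exact hR2
  · rw [Matrix.transpose_transpose]; exact hR1
  · have hAR : A - R₀ᵀ = (Aᵀ - R₀)ᵀ := by
      rw [Matrix.transpose_sub, Matrix.transpose_transpose]
    have htr := transpose_transfer (Aᵀ - R₀) (spec B ^ 2) hRb
    apply spec_le _ _ (sq_nonneg _)
    intro v hv
    rw [hAR]
    calc (∑ i, ((Aᵀ - R₀)ᵀ.mulVec v i) ^ 2) ≤ (spec B ^ 2) ^ 2 * ∑ j, v j ^ 2 := htr v
      _ ≤ (spec B ^ 2) ^ 2 * 1 := by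
          apply mul_le_mul_of_nonneg_left hv (by positivity)
      _ = (spec B ^ 2) ^ 2 := mul_one _
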